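/- arXiv:1001.1400 — 3 statements merged into one kernel-verified Lean document; each statement's English description precedes it below -/
import Mathlib

section
/- Let b₀ > 0 and k ∈ ℕ, and define ψ_k : ℝ → ℝ by ψ_k(x) = e^{b₀x²/2} · (dᵏ/dxᵏ)(e^{−b₀x²}). Then ∫_{ℝ} x⁴·ψ_k(x)² dx = (3(2k²+2k+1)/(4b₀²)) · ∫_{ℝ} ψ_k(x)² dx. -/
open MeasureTheory

open Polynomial Real


lemma integrable_gauss_aux (n : ℕ) :
    Integrable (fun x : ℝ => |x| ^ n * Real.exp (-(x ^ 2 / 2))) := by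
  have h : Integrable (fun x : ℝ => x ^ (n : ℝ) * Real.exp (-(2⁻¹ : ℝ) * x ^ 2)) :=
    integrable_rpow_mul_exp_neg_mul_sq (by norm_num) (neg_one_lt_zero.trans_le (Nat.cast_nonneg n))
  have h2 : Integrable (fun x : ℝ => (-x) ^ (n : ℝ) * Real.exp (-(2⁻¹ : ℝ) * x ^ 2)) := by
    have := h.comp_neg
    simpa [neg_sq] using this
  have hc : Continuous fun x : ℝ => |x| ^ n * Real.exp (-(x ^ 2 / 2)) := by continuity
  refine (h.abs.add h2.abs).mono' hc.aestronglyMeasurable ?_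
  filter_upwards with x
  have he : -(x ^ 2 / 2) = -(2⁻¹ : ℝ) * x ^ 2 := by ring
  rw [Real.norm_eq_abs, abs_of_nonneg (by positivity), he]
  rcases le_or_gt 0 x with hx | hx
  · have h1 : |x| ^ n = x ^ (n : ℝ) := by
      rw [abs_of_nonneg hx, ← Real.rpow_natCast x n]
    have h2' : |x ^ (n : ℝ) * Real.exp (-(2⁻¹ : ℝ) * x ^ 2)| =
        x ^ (n : ℝ) * Real.exp (-(2⁻¹ : ℝ) * x ^ 2) :=
      abs_of_nonneg (by positivity)
    rw [h1]
    calc x ^ (n : ℝ) * Real.exp (-(2⁻¹ : ℝ) * x ^ 2)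
        = |x ^ (n : ℝ) * Real.exp (-(2⁻¹ : ℝ) * x ^ 2)| := h2'.symm
      _ ≤ _ := le_add_of_nonneg_right (abs_nonneg _)
  · have h1 : |x| ^ n = (-x) ^ (n : ℝ) := by
      rw [abs_of_neg hx, ← Real.rpow_natCast (-x) n]
    have h2' : |(-x) ^ (n : ℝ) * Real.exp (-(2⁻¹ : ℝ) * x ^ 2)| =
        (-x) ^ (n : ℝ) * Real.exp (-(2⁻¹ : ℝ) * x ^ 2) :=
      abs_of_nonneg (mul_nonneg (Real.rpow_nonneg (by linarith) _) (Real.exp_nonneg _))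
    rw [h1]
    calc (-x) ^ (n : ℝ) * Real.exp (-(2⁻¹ : ℝ) * x ^ 2)
        = |(-x) ^ (n : ℝ) * Real.exp (-(2⁻¹ : ℝ) * x ^ 2)| := h2'.symm
      _ ≤ _ := le_add_of_nonneg_left (abs_nonneg _)

lemma integrable_Tg (P : Polynomial ℤ) :
    Integrable (fun x : ℝ => (Polynomial.aeval x P : ℝ) * Real.exp (-(x ^ 2 / 2))) := by
  induction P using Polynomial.induction_on' with
  | add p q hp hq => simpa [add_mul] using hp.fun_add hq
  | monomial n a =>
    have hc : Continuous fun x : ℝ =>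
        (Polynomial.aeval x (Polynomial.monomial n a) : ℝ) * Real.exp (-(x ^ 2 / 2)) := by
      simp only [Polynomial.aeval_monomial]
      continuity
    refine ((integrable_gauss_aux n).const_mul |(a : ℝ)|).mono' hc.aestronglyMeasurable ?_
    filter_upwards with x
    simp only [Polynomial.aeval_monomial, norm_mul, Real.norm_eq_abs, Real.abs_exp]
    rw [eq_intCast (algebraMap ℤ ℝ) a, abs_pow]
    exact le_of_eq (by ring)

noncomputable def Tg (P : Polynomial ℤ) : ℝ :=
  ∫ x : ℝ, (Polynomial.aeval x P : ℝ) * Real.exp (-(x ^ 2 / 2))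

lemma Tg_add (P Q : Polynomial ℤ) : Tg (P + Q) = Tg P + Tg Q := by
  unfold Tg
  simp only [map_add, add_mul]
  exact integral_add (integrable_Tg P) (integrable_Tg Q)

lemma Tg_sub (P Q : Polynomial ℤ) : Tg (P - Q) = Tg P - Tg Q := by
  unfold Tg
  simp only [map_sub, sub_mul]
  exact integral_sub (integrable_Tg P) (integrable_Tg Q)

lemma Tg_Cmul (a : ℤ) (P : Polynomial ℤ) : Tg (Polynomial.C a * P) = (a : ℝ) * Tg P := by
  unfold Tg
  simp only [map_mul, map_intCast, Polynomial.aeval_C, eq_intCast, mul_assoc]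
  exact integral_const_mul (a : ℝ) _

lemma Tg_parts (P : Polynomial ℤ) : Tg (Polynomial.X * P) = Tg (Polynomial.derivative P) := by
  have key : Tg (Polynomial.derivative P - Polynomial.X * P) = 0 := by
    unfold Tg
    have hderiv : ∀ x : ℝ, HasDerivAt (fun x : ℝ => (Polynomial.aeval x P : ℝ) * Real.exp (-(x ^ 2 / 2)))
        ((Polynomial.aeval x (Polynomial.derivative P - Polynomial.X * P) : ℝ) * Real.exp (-(x ^ 2 / 2))) x := by
      intro x
      have h1 : HasDerivAt (fun x : ℝ => (Polynomial.aeval x P : ℝ))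
          (Polynomial.aeval x (Polynomial.derivative P)) x := P.hasDerivAt_aeval x
      have h2 : HasDerivAt (fun x : ℝ => -(x ^ 2 / 2)) (-x) x := by
        simpa using ((hasDerivAt_pow 2 x).div_const 2).fun_neg
      have h3 : HasDerivAt (fun x : ℝ => Real.exp (-(x ^ 2 / 2)))
          (Real.exp (-(x ^ 2 / 2)) * (-x)) x := h2.exp
      have : HasDerivAt (fun x : ℝ => (Polynomial.aeval x P : ℝ) * Real.exp (-(x ^ 2 / 2))) _ x :=
        h1.fun_mul h3
      convert this using 1
      simp only [map_sub, map_mul, Polynomial.aeval_X]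
      ring
    exact integral_eq_zero_of_hasDerivAt_of_integrable hderiv
      (integrable_Tg _) (integrable_Tg P)
  have := Tg_sub (Polynomial.derivative P) (Polynomial.X * P)
  rw [key] at this
  linarith

open Polynomial in
lemma derivative_hermite : ∀ n : ℕ,
    Polynomial.derivative (hermite n) = Polynomial.C (n : ℤ) * hermite (n - 1)
  | 0 => by simp
  | 1 => by simp [hermite_one, hermite_zero]
  | (n + 2) => by
    have ih1 := derivative_hermite (n + 1)
    rw [hermite_succ (n + 1), derivative_sub, derivative_mul, derivative_X, one_mul, ih1,
      derivative_mul, derivative_C, zero_mul, zero_add]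
    have e1 : n + 1 - 1 = n := rfl
    have e2 : n + 2 - 1 = n + 1 := rfl
    rw [e1, e2]
    push_cast
    simp only [map_add, map_one, map_ofNat]
    linear_combination (-((Polynomial.C (n : ℤ)) + 1)) * (hermite_succ n)

open Polynomial in
lemma X_mul_hermite (n : ℕ) :
    (Polynomial.X : Polynomial ℤ) * hermite (n + 1) =
      hermite (n + 2) + Polynomial.C ((n : ℤ) + 1) * hermite n := by
  have h := hermite_succ (n + 1)
  rw [derivative_hermite (n + 1)] at h
  have hl : n + 1 - 1 = n := rfl
  rw [hl] at h
  push_cast at h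
  have h' : hermite (n + 2) = Polynomial.X * hermite (n + 1) -
      Polynomial.C ((n : ℤ) + 1) * hermite n := h
  simp only [map_add, map_one] at h' ⊢
  linear_combination -h'

open Polynomial in
lemma Tg_hermite_mul_succ (m n : ℕ) :
    Tg (hermite m * hermite (n + 1)) = Tg (Polynomial.derivative (hermite m) * hermite n) := by
  have h1 : hermite m * hermite (n + 1) =
      Polynomial.X * (hermite m * hermite n) - hermite m * Polynomial.derivative (hermite n) := by
    rw [hermite_succ]; ring
  rw [h1, Tg_sub, Tg_parts, derivative_mul, Tg_add]
  ring

open Polynomial in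
lemma Tg_hermite_zero_succ (n : ℕ) : Tg (hermite 0 * hermite (n + 1)) = 0 := by
  rw [Tg_hermite_mul_succ]
  simp only [hermite_zero, map_one, derivative_one, zero_mul]
  show Tg 0 = 0
  have := Tg_sub 0 0
  simpa using this

open Polynomial in
lemma Tg_hermite_succ_succ (m n : ℕ) :
    Tg (hermite (m + 1) * hermite (n + 1)) = ((m : ℝ) + 1) * Tg (hermite m * hermite n) := by
  rw [Tg_hermite_mul_succ, derivative_hermite (m + 1)]
  have hl : m + 1 - 1 = m := rfl
  rw [hl, mul_assoc, Tg_Cmul]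
  push_cast
  ring

open Polynomial in
lemma Tg_hermite_orth : ∀ m n : ℕ, m < n → Tg (hermite m * hermite n) = 0 := by
  intro m
  induction m with
  | zero =>
    intro n hn
    obtain ⟨n', rfl⟩ := Nat.exists_eq_succ_of_ne_zero hn.ne'
    exact Tg_hermite_zero_succ n'
  | succ m ih =>
    intro n hn
    obtain ⟨n', rfl⟩ := Nat.exists_eq_succ_of_ne_zero (by omega : n ≠ 0)
    rw [Tg_hermite_succ_succ, ih n' (by omega), mul_zero]

open Polynomial in
lemma Tg_hermite_norm2 (m : ℕ) :
    Tg (hermite (m + 2) * hermite (m + 2)) =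
      ((m : ℝ) + 2) * ((m : ℝ) + 1) * Tg (hermite m * hermite m) := by
  rw [Tg_hermite_succ_succ, Tg_hermite_succ_succ]
  push_cast
  ring

open Polynomial in
lemma Tg_X_pow_succ (n : ℕ) :
    Tg ((Polynomial.X : Polynomial ℤ) ^ (n + 2)) = ((n : ℝ) + 1) * Tg (Polynomial.X ^ n) := by
  have h1 : (Polynomial.X : Polynomial ℤ) ^ (n + 2) = Polynomial.X * Polynomial.X ^ (n + 1) := by
    ring
  rw [h1, Tg_parts, derivative_X_pow, Tg_Cmul]
  have h2 : n + 1 - 1 = n := rfl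
  rw [h2]
  push_cast
  ring

open Polynomial in
lemma Tg_core (k : ℕ) :
    Tg ((Polynomial.X : Polynomial ℤ) ^ 4 * (hermite k * hermite k)) =
      3 * (2 * (k : ℝ) ^ 2 + 2 * (k : ℝ) + 1) * Tg (hermite k * hermite k) := by
  match k with
  | 0 =>
    have eA : (Polynomial.X : Polynomial ℤ) ^ 4 * (hermite 0 * hermite 0)
        = Polynomial.X ^ (2 + 2) := by rw [hermite_zero, map_one]; ring
    have eB : hermite 0 * hermite 0 = (Polynomial.X : Polynomial ℤ) ^ 0 := by
      rw [hermite_zero, map_one]; ring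
    have eC : (Polynomial.X : Polynomial ℤ) ^ 2 = Polynomial.X ^ (0 + 2) := by norm_num
    rw [eA, Tg_X_pow_succ 2, eC, Tg_X_pow_succ 0, eB]
    push_cast
    ring
  | 1 =>
    have eA : (Polynomial.X : Polynomial ℤ) ^ 4 * (hermite 1 * hermite 1)
        = Polynomial.X ^ (4 + 2) := by rw [hermite_one]; ring
    have eB : hermite 1 * hermite 1 = (Polynomial.X : Polynomial ℤ) ^ (0 + 2) := by
      rw [hermite_one]; ring
    have eC : (Polynomial.X : Polynomial ℤ) ^ 4 = Polynomial.X ^ (2 + 2) := by norm_num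
    have eD : (Polynomial.X : Polynomial ℤ) ^ 2 = Polynomial.X ^ (0 + 2) := by norm_num
    rw [eA, Tg_X_pow_succ 4, eC, Tg_X_pow_succ 2, eD, Tg_X_pow_succ 0, eB, Tg_X_pow_succ 0]
    push_cast
    ring
  | (m + 2) =>
    have e1 : (Polynomial.X : Polynomial ℤ) * hermite (m + 2) = hermite (m + 3)
        + (Polynomial.C (m : ℤ) + 2) * hermite (m + 1) := by
      have := X_mul_hermite (m + 1)
      push_cast at this
      simp only [map_add, map_one, map_ofNat] at this ⊢
      linear_combination this
    have e2 : (Polynomial.X : Polynomial ℤ) * hermite (m + 3) = hermite (m + 4)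
        + (Polynomial.C (m : ℤ) + 3) * hermite (m + 2) := by
      have := X_mul_hermite (m + 2)
      push_cast at this
      simp only [map_add, map_one, map_ofNat] at this ⊢
      linear_combination this
    have e3 : (Polynomial.X : Polynomial ℤ) * hermite (m + 1) = hermite (m + 2)
        + (Polynomial.C (m : ℤ) + 1) * hermite m := by
      have := X_mul_hermite m
      push_cast at this
      simp only [map_add, map_one, map_ofNat] at this ⊢
      linear_combination this
    have hX2 : (Polynomial.X : Polynomial ℤ) ^ 2 * hermite (m + 2) =
        hermite (m + 4) + Polynomial.C (2 * (m : ℤ) + 5) * hermite (m + 2)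
          + Polynomial.C (((m : ℤ) + 2) * ((m : ℤ) + 1)) * hermite m := by
      simp only [map_add, map_one, map_mul, map_ofNat]
      linear_combination Polynomial.X * e1 + e2 + (Polynomial.C (m : ℤ) + 2) * e3
    have expand : (Polynomial.X : Polynomial ℤ) ^ 4 * (hermite (m + 2) * hermite (m + 2)) =
        hermite (m + 4) * hermite (m + 4)
          + (Polynomial.C ((2 * (m : ℤ) + 5) ^ 2) * (hermite (m + 2) * hermite (m + 2))
          + (Polynomial.C ((((m : ℤ) + 2) * ((m : ℤ) + 1)) ^ 2) * (hermite m * hermite m)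
          + (Polynomial.C (2 * (2 * (m : ℤ) + 5)) * (hermite (m + 2) * hermite (m + 4))
          + (Polynomial.C (2 * (((m : ℤ) + 2) * ((m : ℤ) + 1))) * (hermite m * hermite (m + 4))
          + Polynomial.C (2 * (2 * (m : ℤ) + 5) * (((m : ℤ) + 2) * ((m : ℤ) + 1)))
              * (hermite m * hermite (m + 2)))))) := by
      have h4 : (Polynomial.X : Polynomial ℤ) ^ 4 * (hermite (m + 2) * hermite (m + 2))
          = (Polynomial.X ^ 2 * hermite (m + 2)) * (Polynomial.X ^ 2 * hermite (m + 2)) := by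
        ring
      rw [h4, hX2]
      simp only [map_add, map_one, map_mul, map_ofNat, map_pow]
      ring
    rw [expand, Tg_add, Tg_add, Tg_add, Tg_add, Tg_add,
      Tg_Cmul, Tg_Cmul, Tg_Cmul, Tg_Cmul, Tg_Cmul]
    have z1 : Tg (hermite (m + 2) * hermite (m + 4)) = 0 :=
      Tg_hermite_orth (m + 2) (m + 4) (by omega)
    have z2 : Tg (hermite m * hermite (m + 4)) = 0 :=
      Tg_hermite_orth m (m + 4) (by omega)
    have z3 : Tg (hermite m * hermite (m + 2)) = 0 :=
      Tg_hermite_orth m (m + 2) (by omega)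
    have n1 : Tg (hermite (m + 4) * hermite (m + 4)) =
        ((m : ℝ) + 2 + 2) * ((m : ℝ) + 2 + 1) * Tg (hermite (m + 2) * hermite (m + 2)) := by
      have := Tg_hermite_norm2 (m + 2)
      push_cast at this
      exact this
    have n2 : Tg (hermite (m + 2) * hermite (m + 2)) =
        ((m : ℝ) + 2) * ((m : ℝ) + 1) * Tg (hermite m * hermite m) := Tg_hermite_norm2 m
    rw [z1, z2, z3, n1, n2]
    push_cast
    ring

/-- Fourth-moment identity for Hermite eigenfunctions:
`∫ x⁴ ψ_k² = (3(2k²+2k+1)/(4b₀²)) ∫ ψ_k²`. -/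
theorem hermite_fourth_moment (b₀ : ℝ) (hb₀ : 0 < b₀) (k : ℕ) (ψ : ℝ → ℝ)
    (hψ : ∀ x, ψ x =
      Real.exp (b₀ * x ^ 2 / 2) * iteratedDeriv k (fun y => Real.exp (-b₀ * y ^ 2)) x) :
    ∫ x : ℝ, x ^ 4 * ψ x ^ 2 =
      (3 * (2 * (k : ℝ) ^ 2 + 2 * (k : ℝ) + 1) / (4 * b₀ ^ 2)) * ∫ x : ℝ, ψ x ^ 2 := by
  set c : ℝ := Real.sqrt (2 * b₀) with hc_def
  have hcpos : 0 < c := Real.sqrt_pos.2 (by linarith)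
  have hc2 : c ^ 2 = 2 * b₀ := Real.sq_sqrt (by linarith)
  have hcne : c ≠ 0 := ne_of_gt hcpos
  -- smoothness of the standard gaussian
  have hg : ContDiff ℝ (k : ℕ∞) (fun y : ℝ => Real.exp (-(y ^ 2 / 2))) := by
    have : ContDiff ℝ ⊤ (fun y : ℝ => Real.exp (-(y ^ 2 / 2))) :=
      Real.contDiff_exp.comp (((contDiff_id.pow 2).div_const 2).neg)
    exact this.of_le le_top
  -- rewrite the iterated derivative via Hermite polynomials
  have hiter : ∀ x : ℝ, iteratedDeriv k (fun y => Real.exp (-b₀ * y ^ 2)) x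
      = c ^ k * ((-1 : ℝ) ^ k * (Polynomial.aeval (c * x) (hermite k))
          * Real.exp (-((c * x) ^ 2 / 2))) := by
    intro x
    have hfun : (fun y : ℝ => Real.exp (-b₀ * y ^ 2))
        = fun y => Real.exp (-((c * y) ^ 2 / 2)) := by
      funext y
      congr 1
      rw [mul_pow]
      linear_combination (y ^ 2 / 2) * hc2
    rw [hfun, iteratedDeriv_comp_const_mul hg c]
    simp only [iteratedDeriv_eq_iterate, Polynomial.deriv_gaussian_eq_hermite_mul_gaussian]
  -- squared eigenfunction
  have hψsq : ∀ x : ℝ, ψ x ^ 2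
      = c ^ (2 * k) * ((Polynomial.aeval (c * x) (hermite k)) ^ 2
          * Real.exp (-((c * x) ^ 2 / 2))) := by
    intro x
    have hexp : Real.exp (b₀ * x ^ 2 / 2) * Real.exp (-((c * x) ^ 2 / 2))
        = Real.exp (-(b₀ * x ^ 2) / 2) := by
      rw [← Real.exp_add]
      congr 1
      rw [mul_pow]
      linear_combination (-(x ^ 2) / 2) * hc2
    have hψ' : ψ x = c ^ k * (-1 : ℝ) ^ k * (Polynomial.aeval (c * x) (hermite k))
        * Real.exp (-(b₀ * x ^ 2) / 2) := by
      rw [hψ x, hiter x, ← hexp]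
      ring
    rw [hψ']
    have h1 : ((-1 : ℝ) ^ k) ^ 2 = 1 := by
      rw [← pow_mul, mul_comm, pow_mul]
      norm_num
    have h2 : (Real.exp (-(b₀ * x ^ 2) / 2)) ^ 2 = Real.exp (-((c * x) ^ 2 / 2)) := by
      rw [pow_two, ← Real.exp_add]
      congr 1
      rw [mul_pow]
      linear_combination (x ^ 2 / 2) * hc2
    calc (c ^ k * (-1 : ℝ) ^ k * (Polynomial.aeval (c * x) (hermite k))
          * Real.exp (-(b₀ * x ^ 2) / 2)) ^ 2
        = (c ^ k) ^ 2 * ((-1 : ℝ) ^ k) ^ 2 * (Polynomial.aeval (c * x) (hermite k)) ^ 2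
          * (Real.exp (-(b₀ * x ^ 2) / 2)) ^ 2 := by ring
      _ = c ^ (2 * k) * ((Polynomial.aeval (c * x) (hermite k)) ^ 2
          * Real.exp (-((c * x) ^ 2 / 2))) := by
          rw [h1, h2, ← pow_mul]
          ring
  -- identify the two integrals with Tg expressions
  have key1 : ∫ x : ℝ, x ^ 4 * ψ x ^ 2
      = (c ^ (2 * k) / c ^ 4) * (|c⁻¹| * Tg (Polynomial.X ^ 4 * (hermite k * hermite k))) := by
    have step1 : ∫ x : ℝ, x ^ 4 * ψ x ^ 2
        = ∫ x : ℝ, (c ^ (2 * k) / c ^ 4) *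
            ((fun u : ℝ => (Polynomial.aeval u (Polynomial.X ^ 4 * (hermite k * hermite k)) : ℝ)
              * Real.exp (-(u ^ 2 / 2))) (c * x)) := by
      congr 1
      funext x
      rw [hψsq x]
      simp only [map_mul, map_pow, Polynomial.aeval_X]
      field_simp
    rw [step1, integral_const_mul,
      MeasureTheory.Measure.integral_comp_mul_left
        (fun u : ℝ => (Polynomial.aeval u (Polynomial.X ^ 4 * (hermite k * hermite k)) : ℝ)
          * Real.exp (-(u ^ 2 / 2))) c, smul_eq_mul]
    rfl
  have key2 : ∫ x : ℝ, ψ x ^ 2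
      = c ^ (2 * k) * (|c⁻¹| * Tg (hermite k * hermite k)) := by
    have step1 : ∫ x : ℝ, ψ x ^ 2
        = ∫ x : ℝ, c ^ (2 * k) *
            ((fun u : ℝ => (Polynomial.aeval u (hermite k * hermite k) : ℝ)
              * Real.exp (-(u ^ 2 / 2))) (c * x)) := by
      congr 1
      funext x
      rw [hψsq x]
      simp only [map_mul]
      ring
    rw [step1, integral_const_mul,
      MeasureTheory.Measure.integral_comp_mul_left
        (fun u : ℝ => (Polynomial.aeval u (hermite k * hermite k) : ℝ)
          * Real.exp (-(u ^ 2 / 2))) c, smul_eq_mul]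
    rfl
  rw [key1, key2, Tg_core k]
  have hc4 : c ^ 4 = 4 * b₀ ^ 2 := by
    have : c ^ 4 = (c ^ 2) ^ 2 := by ring
    rw [this, hc2]
    ring
  rw [hc4, abs_of_pos (inv_pos.2 hcpos)]
  field_simp
end

section
/- Let b₀ > 0 and k ∈ ℕ, and define ψ_k : ℝ → ℝ by ψ_k(x) = e^{b₀x²/2} · (dᵏ/dxᵏ)(e^{−b₀x²}). Then ∫_{ℝ} x²·ψ_k''(x)·ψ_k(x) dx = −((2k²+2k−1)/4) · ∫_{ℝ} ψ_k(x)² dx. -/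
open MeasureTheory

open Polynomial in
/-- Scaled Hermite-type polynomials: `d^k/dx^k e^{-bx²} = (hermP b k).eval x · e^{-bx²}`. -/
noncomputable def hermP (b : ℝ) : ℕ → Polynomial ℝ
  | 0 => 1
  | k + 1 => derivative (hermP b k) - C (2 * b) * X * hermP b k

open Polynomial in
lemma hermP_ode (b : ℝ) (k : ℕ) :
    derivative (derivative (hermP b k)) - C (2 * b) * X * derivative (hermP b k)
      + C (2 * b) * C (k : ℝ) * hermP b k = 0 := by
  induction k with
  | zero => simp [hermP]
  | succ k ih =>
    have ih' := congrArg derivative ih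
    simp only [derivative_add, derivative_sub, derivative_mul, derivative_C, derivative_X,
      derivative_zero, zero_mul, mul_one, one_mul, zero_add, add_zero] at ih'
    show derivative (derivative (hermP b (k + 1))) - _ + _ = 0
    push_cast
    simp only [hermP, derivative_sub, derivative_mul, derivative_C, derivative_X,
      derivative_one, zero_mul, mul_zero, one_mul, zero_add, map_add, map_one]
    linear_combination ih' - C (2 * b) * X * ih

lemma hasDerivAt_gaussFull (b x : ℝ) :
    HasDerivAt (fun y : ℝ => Real.exp (-b * y ^ 2)) (-2 * b * x * Real.exp (-b * x ^ 2)) x := by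
  have h : HasDerivAt (fun y : ℝ => -b * y ^ 2) (-2 * b * x) x := by
    have := (hasDerivAt_pow 2 x).const_mul (-b)
    refine this.congr_deriv ?_
    push_cast; ring
  have := h.exp
  convert this using 1
  ring

lemma hasDerivAt_gaussHalf (b x : ℝ) :
    HasDerivAt (fun y : ℝ => Real.exp (-b * y ^ 2 / 2)) (-b * x * Real.exp (-b * x ^ 2 / 2)) x := by
  have h : HasDerivAt (fun y : ℝ => -b * y ^ 2 / 2) (-b * x) x := by
    have := ((hasDerivAt_pow 2 x).const_mul (-b)).div_const 2
    refine this.congr_deriv ?_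
    push_cast; ring
  have := h.exp
  convert this using 1
  ring

open Polynomial in
lemma iter_gauss (b : ℝ) (k : ℕ) :
    iteratedDeriv k (fun y : ℝ => Real.exp (-b * y ^ 2))
      = fun x => (hermP b k).eval x * Real.exp (-b * x ^ 2) := by
  induction k with
  | zero => funext x; simp [hermP]
  | succ k ih =>
    funext x
    rw [iteratedDeriv_succ, ih]
    have h : HasDerivAt (fun x : ℝ => (hermP b k).eval x * Real.exp (-b * x ^ 2))
        ((derivative (hermP b k)).eval x * Real.exp (-b * x ^ 2)
          + (hermP b k).eval x * (-2 * b * x * Real.exp (-b * x ^ 2))) x :=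
      ((hermP b k).hasDerivAt x).mul (hasDerivAt_gaussFull b x)
    rw [h.deriv]
    show _ = (hermP b (k+1)).eval x * _
    simp only [hermP, eval_sub, eval_mul, eval_C, eval_X]
    ring

open Polynomial in
lemma integrable_eval_mul_gauss {b : ℝ} (hb : 0 < b) (P : Polynomial ℝ) :
    Integrable (fun x : ℝ => P.eval x * Real.exp (-b * x ^ 2)) := by
  have h0 : ∀ n : ℕ, Integrable (fun x : ℝ => x ^ n * Real.exp (-b * x ^ 2)) := by
    intro n
    have hn : (-1 : ℝ) < (n : ℝ) := lt_of_lt_of_le (by norm_num) (Nat.cast_nonneg n)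
    have := integrable_rpow_mul_exp_neg_mul_sq hb hn
    simpa [Real.rpow_natCast] using this
  have heq : (fun x : ℝ => P.eval x * Real.exp (-b * x ^ 2))
      = fun x => ∑ i ∈ Finset.range (P.natDegree + 1),
          P.coeff i * (x ^ i * Real.exp (-b * x ^ 2)) := by
    funext x
    rw [eval_eq_sum_range, Finset.sum_mul]
    exact Finset.sum_congr rfl fun i _ => by ring
  rw [heq]
  exact integrable_finset_sum _ fun i _ => ((h0 i).const_mul _)

/-- Mixed moment identity for Hermite eigenfunctions:
`∫ x² ψ_k'' ψ_k = -((2k²+2k-1)/4) ∫ ψ_k²`. -/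
theorem hermite_mixed_moment (b₀ : ℝ) (hb₀ : 0 < b₀) (k : ℕ) (ψ : ℝ → ℝ)
    (hψ : ∀ x, ψ x =
      Real.exp (b₀ * x ^ 2 / 2) * iteratedDeriv k (fun y => Real.exp (-b₀ * y ^ 2)) x) :
    ∫ x : ℝ, x ^ 2 * deriv (deriv ψ) x * ψ x =
      -((2 * (k : ℝ) ^ 2 + 2 * (k : ℝ) - 1) / 4) * ∫ x : ℝ, ψ x ^ 2 := by
  classical
  set Q : Polynomial ℝ := hermP b₀ k with hQ
  set Q1 : Polynomial ℝ := Polynomial.derivative Q with hQ1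
  set Q2 : Polynomial ℝ := Polynomial.derivative Q1 with hQ2
  set c : ℝ := (2 * (k : ℝ) ^ 2 + 2 * (k : ℝ) - 1) / 4 with hc
  -- ψ as polynomial times half-gaussian
  have hψE : ψ = fun x => Q.eval x * Real.exp (-b₀ * x ^ 2 / 2) := by
    funext x
    have h : Real.exp (b₀ * x ^ 2 / 2) * (Q.eval x * Real.exp (-b₀ * x ^ 2))
        = Q.eval x * Real.exp (-b₀ * x ^ 2 / 2) := by
      rw [mul_comm (Real.exp (b₀ * x ^ 2 / 2)) _, mul_assoc, ← Real.exp_add]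
      congr 2
      ring
    rw [hψ x, iter_gauss]
    exact h
  subst hψE
  -- the ODE, evaluated
  have hode : ∀ x : ℝ, Q2.eval x - 2 * b₀ * x * Q1.eval x + 2 * b₀ * (k : ℝ) * Q.eval x = 0 := by
    intro x
    have := congrArg (Polynomial.eval x) (hermP_ode b₀ k)
    simpa [← hQ, ← hQ1, ← hQ2, mul_assoc] using this
  -- first derivative
  set R : Polynomial ℝ := Q1 - Polynomial.C b₀ * Polynomial.X * Q with hR
  have hDψ : deriv (fun x => Q.eval x * Real.exp (-b₀ * x ^ 2 / 2))
      = fun x => R.eval x * Real.exp (-b₀ * x ^ 2 / 2) := by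
    funext x
    have h : HasDerivAt (fun x : ℝ => Q.eval x * Real.exp (-b₀ * x ^ 2 / 2))
        (Q1.eval x * Real.exp (-b₀ * x ^ 2 / 2)
          + Q.eval x * (-b₀ * x * Real.exp (-b₀ * x ^ 2 / 2))) x :=
      (Q.hasDerivAt x).mul (hasDerivAt_gaussHalf b₀ x)
    rw [h.deriv, hR]
    simp only [Polynomial.eval_sub, Polynomial.eval_mul, Polynomial.eval_C, Polynomial.eval_X]
    ring
  -- second derivative
  set S : Polynomial ℝ := Polynomial.derivative R - Polynomial.C b₀ * Polynomial.X * R with hS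
  have hDDψ : deriv (deriv (fun x => Q.eval x * Real.exp (-b₀ * x ^ 2 / 2)))
      = fun x => S.eval x * Real.exp (-b₀ * x ^ 2 / 2) := by
    rw [hDψ]
    funext x
    have h : HasDerivAt (fun x : ℝ => R.eval x * Real.exp (-b₀ * x ^ 2 / 2))
        ((Polynomial.derivative R).eval x * Real.exp (-b₀ * x ^ 2 / 2)
          + R.eval x * (-b₀ * x * Real.exp (-b₀ * x ^ 2 / 2))) x :=
      (R.hasDerivAt x).mul (hasDerivAt_gaussHalf b₀ x)
    rw [h.deriv, hS]
    simp only [Polynomial.eval_sub, Polynomial.eval_mul, Polynomial.eval_C, Polynomial.eval_X]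
    ring
  rw [hDDψ]
  -- the magic total-derivative polynomial
  set X : Polynomial ℝ := Polynomial.X with hX
  set Gp : Polynomial ℝ :=
      Polynomial.C (-(1 + 2 * (k : ℝ))) * (Q * Q1)
    + Polynomial.C (1 + 2 * (k : ℝ)) * X * (Q1 * Q1)
    + Polynomial.C (2 * b₀ * (2 * (k : ℝ) ^ 2 + 3 * (k : ℝ) - 2)) * X * (Q * Q)
    + Polynomial.C (4 * b₀ * (1 - (k : ℝ))) * (X * X) * (Q * Q1)
    - Polynomial.C (2 * b₀) * (X * X * X) * (Q1 * Q1)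
    - Polynomial.C (4 * b₀ ^ 2 * (2 + (k : ℝ))) * (X * X * X) * (Q * Q)
    + Polynomial.C (4 * b₀ ^ 2) * (X * X * X * X) * (Q * Q1) with hGp
  -- gaussian square relation
  have hE2 : ∀ x : ℝ, Real.exp (-b₀ * x ^ 2 / 2) * Real.exp (-b₀ * x ^ 2 / 2)
      = Real.exp (-b₀ * x ^ 2) := by
    intro x
    rw [← Real.exp_add]
    congr 1
    ring
  -- F and its derivative
  have hF : ∀ x : ℝ, HasDerivAt (fun x : ℝ => Gp.eval x * Real.exp (-b₀ * x ^ 2))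
      (((Polynomial.derivative Gp).eval x - 2 * b₀ * x * Gp.eval x) * Real.exp (-b₀ * x ^ 2)) x := by
    intro x
    have h := (Gp.hasDerivAt x).mul (hasDerivAt_gaussFull b₀ x)
    refine h.congr_deriv ?_
    ring
  -- key pointwise identity
  have hkey : ∀ x : ℝ, ((Polynomial.derivative Gp).eval x - 2 * b₀ * x * Gp.eval x)
      * Real.exp (-b₀ * x ^ 2)
      = 16 * b₀ * ((x ^ 2 * S.eval x * Q.eval x + c * Q.eval x ^ 2) * Real.exp (-b₀ * x ^ 2)) := by
    intro x
    have h := hode x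
    simp only [hGp, hS, hR, hX, hc, map_neg, Polynomial.derivative_add,
      Polynomial.derivative_sub, Polynomial.derivative_mul, Polynomial.derivative_C,
      Polynomial.derivative_X, Polynomial.eval_add, Polynomial.eval_sub, Polynomial.eval_mul,
      Polynomial.eval_neg, Polynomial.eval_C, Polynomial.eval_X, Polynomial.eval_one,
      Polynomial.eval_zero, Polynomial.derivative_neg, Polynomial.derivative_one,
      neg_zero, zero_mul, one_mul, mul_one, mul_zero, zero_add, add_zero, ← hQ2]
    linear_combination ((-(1 + 2 * (k : ℝ)) * Q.eval x + (2 + 4 * (k : ℝ)) * x * Q1.eval x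
      - 4 * b₀ * (3 + (k : ℝ)) * x ^ 2 * Q.eval x - 4 * b₀ * x ^ 3 * Q1.eval x
      + 4 * b₀ ^ 2 * x ^ 4 * Q.eval x) * Real.exp (-b₀ * x ^ 2)) * h
  -- integrabilities
  have hint1 : Integrable (fun x : ℝ => x ^ 2 * (S.eval x * Real.exp (-b₀ * x ^ 2 / 2))
      * (Q.eval x * Real.exp (-b₀ * x ^ 2 / 2))) := by
    have : (fun x : ℝ => x ^ 2 * (S.eval x * Real.exp (-b₀ * x ^ 2 / 2))
        * (Q.eval x * Real.exp (-b₀ * x ^ 2 / 2)))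
        = fun x => (X * X * S * Q).eval x * Real.exp (-b₀ * x ^ 2) := by
      funext x
      simp only [Polynomial.eval_mul, Polynomial.eval_X, hX]
      linear_combination (x ^ 2 * S.eval x * Q.eval x) * hE2 x
    rw [this]
    exact integrable_eval_mul_gauss hb₀ _
  have hint2 : Integrable (fun x : ℝ => (Q.eval x * Real.exp (-b₀ * x ^ 2 / 2)) ^ 2) := by
    have : (fun x : ℝ => (Q.eval x * Real.exp (-b₀ * x ^ 2 / 2)) ^ 2)
        = fun x => (Q * Q).eval x * Real.exp (-b₀ * x ^ 2) := by
      funext x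
      simp only [Polynomial.eval_mul]
      linear_combination (Q.eval x * Q.eval x) * hE2 x
    rw [this]
    exact integrable_eval_mul_gauss hb₀ _
  have hintF : Integrable (fun x : ℝ => Gp.eval x * Real.exp (-b₀ * x ^ 2)) :=
    integrable_eval_mul_gauss hb₀ _
  have hintFd : Integrable (fun x : ℝ => ((Polynomial.derivative Gp).eval x
      - 2 * b₀ * x * Gp.eval x) * Real.exp (-b₀ * x ^ 2)) := by
    have : (fun x : ℝ => ((Polynomial.derivative Gp).eval x - 2 * b₀ * x * Gp.eval x)
        * Real.exp (-b₀ * x ^ 2))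
        = fun x => (Polynomial.derivative Gp - Polynomial.C (2 * b₀) * X * Gp).eval x
            * Real.exp (-b₀ * x ^ 2) := by
      funext x
      simp only [Polynomial.eval_sub, Polynomial.eval_mul, Polynomial.eval_C, Polynomial.eval_X,
        hX]
      try ring
    rw [this]
    exact integrable_eval_mul_gauss hb₀ _
  -- integral of total derivative is zero
  have hzero : ∫ x : ℝ, ((Polynomial.derivative Gp).eval x - 2 * b₀ * x * Gp.eval x)
      * Real.exp (-b₀ * x ^ 2) = 0 :=
    integral_eq_zero_of_hasDerivAt_of_integrable hF hintFd hintF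
  have hzero2 : ∫ x : ℝ, (x ^ 2 * (S.eval x * Real.exp (-b₀ * x ^ 2 / 2))
      * (Q.eval x * Real.exp (-b₀ * x ^ 2 / 2))
      + c * (Q.eval x * Real.exp (-b₀ * x ^ 2 / 2)) ^ 2) = 0 := by
    have h16 : (16 : ℝ) * b₀ ≠ 0 := by positivity
    have heq : (fun x : ℝ => ((Polynomial.derivative Gp).eval x - 2 * b₀ * x * Gp.eval x)
        * Real.exp (-b₀ * x ^ 2))
        = fun x => 16 * b₀ * (x ^ 2 * (S.eval x * Real.exp (-b₀ * x ^ 2 / 2))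
            * (Q.eval x * Real.exp (-b₀ * x ^ 2 / 2))
            + c * (Q.eval x * Real.exp (-b₀ * x ^ 2 / 2)) ^ 2) := by
      funext x
      rw [hkey x]
      linear_combination (-(16 * b₀ * x ^ 2 * S.eval x * Q.eval x)
        - 16 * b₀ * c * Q.eval x * Q.eval x) * (hE2 x)
    rw [heq] at hzero
    rw [integral_const_mul] at hzero
    exact (mul_eq_zero.mp hzero).resolve_left h16
  rw [integral_add hint1 (hint2.const_mul c), integral_const_mul] at hzero2
  have : ∫ x : ℝ, x ^ 2 * (S.eval x * Real.exp (-b₀ * x ^ 2 / 2))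
      * (Q.eval x * Real.exp (-b₀ * x ^ 2 / 2))
      = -c * ∫ x : ℝ, (Q.eval x * Real.exp (-b₀ * x ^ 2 / 2)) ^ 2 := by
    linarith
  simpa [hc] using this
end

section
/- Let b₀ > 0 and k ∈ ℕ, and define ψ_k : ℝ → ℝ by ψ_k(x) = e^{b₀x²/2} · (dᵏ/dxᵏ)(e^{−b₀x²}). Then ∫_{ℝ} ψ_k''(x)² dx = (3(2k²+2k+1)·b₀²/4) · ∫_{ℝ} ψ_k(x)² dx. -/
open MeasureTheory Polynomial Filter Real Set

section Aux

lemma integrable_poly_gauss {b : ℝ} (hb : 0 < b) (R : ℝ[X]) :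
    Integrable (fun x : ℝ => eval x R * Real.exp (-b * x ^ 2)) := by
  have hmono : ∀ n : ℕ, Integrable (fun x : ℝ => x ^ n * Real.exp (-b * x ^ 2)) := by
    intro n
    have hn : (-1 : ℝ) < n := lt_of_lt_of_le neg_one_lt_zero (Nat.cast_nonneg n)
    simpa [Real.rpow_natCast] using integrable_rpow_mul_exp_neg_mul_sq hb hn
  have hfun : (fun x : ℝ => eval x R * Real.exp (-b * x ^ 2))
      = fun x => ∑ i ∈ Finset.range (R.natDegree + 1),
          R.coeff i * (x ^ i * Real.exp (-b * x ^ 2)) := by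
    funext x
    rw [eval_eq_sum_range, Finset.sum_mul]
    simp [mul_assoc]
  rw [hfun]
  exact integrable_finset_sum _ (fun i _ => (hmono i).const_mul _)

lemma tendsto_poly_gauss_atTop {b : ℝ} (hb : 0 < b) (R : ℝ[X]) :
    Tendsto (fun x : ℝ => eval x R * Real.exp (-b * x ^ 2)) atTop (nhds 0) := by
  have hmono : ∀ n : ℕ, Tendsto (fun x : ℝ => x ^ n * Real.exp (-b * x ^ 2)) atTop (nhds 0) := by
    intro n
    have h1 : Tendsto (fun x : ℝ => Real.exp (-(1/2) * x)) atTop (nhds 0) := by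
      apply Real.tendsto_exp_atBot.comp
      exact Tendsto.const_mul_atTop_of_neg (by norm_num) tendsto_id
    have h2 := (rpow_mul_exp_neg_mul_sq_isLittleO_exp_neg hb (n : ℝ)).isBigO.trans_tendsto h1
    simpa [Real.rpow_natCast] using h2
  have hfun : (fun x : ℝ => eval x R * Real.exp (-b * x ^ 2))
      = fun x => ∑ i ∈ Finset.range (R.natDegree + 1),
          R.coeff i * (x ^ i * Real.exp (-b * x ^ 2)) := by
    funext x
    rw [eval_eq_sum_range, Finset.sum_mul]
    simp [mul_assoc]
  rw [hfun]
  have := tendsto_finset_sum (Finset.range (R.natDegree + 1))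
    (fun i _ => ((hmono i).const_mul (R.coeff i)))
  simpa using this

lemma tendsto_poly_gauss_atBot {b : ℝ} (hb : 0 < b) (R : ℝ[X]) :
    Tendsto (fun x : ℝ => eval x R * Real.exp (-b * x ^ 2)) atBot (nhds 0) := by
  have h := (tendsto_poly_gauss_atTop hb (R.comp (-X))).comp tendsto_neg_atBot_atTop
  have hfun : (fun x : ℝ => eval x (R.comp (-X)) * Real.exp (-b * x ^ 2)) ∘ (fun x : ℝ => -x)
      = fun x : ℝ => eval x R * Real.exp (-b * x ^ 2) := by
    funext x
    simp [Function.comp, eval_comp]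
  rwa [hfun] at h

lemma integral_deriv_poly_gauss {b : ℝ} (hb : 0 < b) (R : ℝ[X]) :
    ∫ x : ℝ, eval x (derivative R - 2 * C b * X * R) * Real.exp (-b * x ^ 2) = 0 := by
  set R' := derivative R - 2 * C b * X * R with hR'
  set f := fun x : ℝ => eval x R * Real.exp (-b * x ^ 2) with hf
  set f' := fun x : ℝ => eval x R' * Real.exp (-b * x ^ 2) with hf'
  have hderiv : ∀ x : ℝ, HasDerivAt f (f' x) x := by
    intro x
    have h1 : HasDerivAt (fun x : ℝ => -b * x ^ 2) (-b * (2 * x)) x := by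
      simpa using (hasDerivAt_pow 2 x).const_mul (-b)
    have h3 := (R.hasDerivAt x).mul h1.exp
    refine h3.congr_deriv ?_
    simp [hf', hR']
    ring
  have hInt : Integrable f' := integrable_poly_gauss hb R'
  have htop : Tendsto f atTop (nhds 0) := tendsto_poly_gauss_atTop hb R
  have hbot : Tendsto f atBot (nhds 0) := tendsto_poly_gauss_atBot hb R
  have hIoi : ∫ x in Ioi (0:ℝ), f' x = 0 - f 0 :=
    integral_Ioi_of_hasDerivAt_of_tendsto' (fun x _ => hderiv x) hInt.integrableOn htop
  have hIic : ∫ x in Iic (0:ℝ), f' x = f 0 - 0 :=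
    integral_Iic_of_hasDerivAt_of_tendsto' (fun x _ => hderiv x) hInt.integrableOn hbot
  have := intervalIntegral.integral_Iic_add_Ioi (f := f') (b := (0:ℝ))
    hInt.integrableOn hInt.integrableOn
  rw [← this, hIoi, hIic]
  ring

lemma derivative_hermite' (n : ℕ) :
    derivative (hermite (n + 1)) = ((n : ℤ[X]) + 1) * hermite n := by
  induction n with
  | zero => simp [hermite_one, hermite_zero]
  | succ n ih =>
    rw [hermite_succ (n + 1), derivative_sub, derivative_mul, derivative_X, ih,
      derivative_mul, hermite_succ n]
    simp only [derivative_add, derivative_one, derivative_natCast]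
    push_cast
    ring

lemma hermite_ode (n : ℕ) :
    derivative (derivative (hermite n)) =
      X * derivative (hermite n) - (n : ℤ[X]) * hermite n := by
  have h1 := derivative_hermite' n
  have h2 : derivative (hermite (n + 1)) =
      hermite n + X * derivative (hermite n) - derivative (derivative (hermite n)) := by
    rw [hermite_succ n, derivative_sub, derivative_mul, derivative_X]
    ring
  rw [h2] at h1
  linear_combination -h1

lemma diff_iter_gauss (n : ℕ) :
    Differentiable ℝ (deriv^[n] (fun y : ℝ => Real.exp (-(y ^ 2 / 2)))) := by
  have hg : deriv^[n] (fun y : ℝ => Real.exp (-(y ^ 2 / 2)))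
      = fun y => (-1 : ℝ) ^ n * aeval y (hermite n) * Real.exp (-(y ^ 2 / 2)) :=
    funext (Polynomial.deriv_gaussian_eq_hermite_mul_gaussian n)
  rw [hg]
  apply Differentiable.mul
  · exact (Polynomial.differentiable_aeval _).const_mul _
  · exact Differentiable.exp (by fun_prop)

lemma iter_deriv_gauss_scale (c : ℝ) (n : ℕ) (x : ℝ) :
    deriv^[n] (fun y : ℝ => Real.exp (-((c * y) ^ 2 / 2))) x
      = c ^ n * deriv^[n] (fun y : ℝ => Real.exp (-(y ^ 2 / 2))) (c * x) := by
  induction n generalizing x with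
  | zero => simp
  | succ n ih =>
    rw [Function.iterate_succ_apply', Function.iterate_succ_apply']
    have hfun : deriv^[n] (fun y : ℝ => Real.exp (-((c * y) ^ 2 / 2)))
        = fun y => c ^ n * deriv^[n] (fun y : ℝ => Real.exp (-(y ^ 2 / 2))) (c * y) :=
      funext ih
    rw [hfun, deriv_const_mul_field]
    have hdiff := diff_iter_gauss n
    have hcomp : deriv (fun y => deriv^[n] (fun y : ℝ => Real.exp (-(y ^ 2 / 2))) (c * y)) x
        = c * deriv (deriv^[n] (fun y : ℝ => Real.exp (-(y ^ 2 / 2)))) (c * x) := by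
      have h := ((hdiff (c * x)).hasDerivAt.comp x ((hasDerivAt_id x).const_mul c))
      simpa [Function.comp_def, mul_comm] using h.deriv
    rw [hcomp]
    ring

lemma poly_identity (t κ : ℝ) (Q : ℝ[X])
    (hode : derivative (derivative Q) = 2 * C t * X * derivative Q - 2 * C t * C κ * Q) :
    derivative ((-4*C t^3*(C κ+2)*X^3 + 2*C t^2*(5*(2*C κ+1)*(C κ+1)-3)*X) * Q^2
      + (4*C t^3*X^4 + 2*C t^2*(3-5*(2*C κ+1))*X^2 - 5*(2*C κ+1)*C t) * Q * derivative Q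
      + (-2*C t^2*X^3 + 5*(2*C κ+1)*C t*X) * (derivative Q)^2)
      - 2*C t*X*((-4*C t^3*(C κ+2)*X^3 + 2*C t^2*(5*(2*C κ+1)*(C κ+1)-3)*X) * Q^2
      + (4*C t^3*X^4 + 2*C t^2*(3-5*(2*C κ+1))*X^2 - 5*(2*C κ+1)*C t) * Q * derivative Q
      + (-2*C t^2*X^3 + 5*(2*C κ+1)*C t*X) * (derivative Q)^2)
    = 16*((C t^2*X^2 - (2*C κ+1)*C t)*Q)^2 - 12*(2*C κ^2+2*C κ+1)*C t^2*Q^2 := by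
  simp only [derivative_add, derivative_sub, derivative_mul, derivative_pow, derivative_X,
    derivative_C, derivative_ofNat, derivative_one, derivative_neg]
  push_cast
  simp only [map_ofNat]
  linear_combination ((4*C t^3*X^4 + 2*C t^2*(3-5*(2*C κ+1))*X^2 - 5*(2*C κ+1)*C t)*Q
    + 2*(-2*C t^2*X^3 + 5*(2*C κ+1)*C t*X)*derivative Q) * hode

lemma ode_Q (b c : ℝ) (hc2 : c ^ 2 = 2 * b) (k : ℕ) :
    derivative (derivative (((hermite k).map (Int.castRingHom ℝ)).comp (C c * X))) =
      2 * C b * X * derivative (((hermite k).map (Int.castRingHom ℝ)).comp (C c * X))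
        - 2 * C b * C (k : ℝ) * (((hermite k).map (Int.castRingHom ℝ)).comp (C c * X)) := by
  set P : ℝ[X] := (hermite k).map (Int.castRingHom ℝ) with hP
  have hPode : derivative (derivative P) = X * derivative P - C (k : ℝ) * P := by
    have h := congrArg (Polynomial.map (Int.castRingHom ℝ)) (hermite_ode k)
    simp only [← derivative_map, Polynomial.map_sub, Polynomial.map_mul, Polynomial.map_natCast,
      map_X] at h
    rw [hP, h, C_eq_natCast]
  have hQ1 : derivative (P.comp (C c * X)) = C c * (derivative P).comp (C c * X) := by
    rw [derivative_comp]
    simp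
  have hQ2 : derivative (derivative (P.comp (C c * X)))
      = C c * (C c * (derivative (derivative P)).comp (C c * X)) := by
    rw [hQ1, derivative_mul, derivative_C, derivative_comp]
    simp
  have hcc : (C c : ℝ[X]) * C c = 2 * C b := by
    rw [← C_mul, show c * c = 2 * b by nlinarith [hc2], C_mul, map_ofNat]
  rw [hQ2, hPode, hQ1]
  simp only [sub_comp, mul_comp, X_comp, C_comp]
  linear_combination (C c * X * ((derivative P).comp (C c * X))
    - C (k : ℝ) * (P.comp (C c * X))) * hcc

end Aux

/-- Identity for the second derivative of Hermite eigenfunctions: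
`∫ (ψ_k'')² = (3(2k²+2k+1)b₀²/4) ∫ ψ_k²`. -/
theorem hermite_second_deriv_moment (b₀ : ℝ) (hb₀ : 0 < b₀) (k : ℕ) (ψ : ℝ → ℝ)
    (hψ : ∀ x, ψ x =
      Real.exp (b₀ * x ^ 2 / 2) * iteratedDeriv k (fun y => Real.exp (-b₀ * y ^ 2)) x) :
    ∫ x : ℝ, (deriv (deriv ψ) x) ^ 2 =
      (3 * (2 * (k : ℝ) ^ 2 + 2 * (k : ℝ) + 1) * b₀ ^ 2 / 4) * ∫ x : ℝ, ψ x ^ 2 := by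
  obtain ⟨c, hc0, hc2⟩ : ∃ c : ℝ, 0 ≤ c ∧ c ^ 2 = 2 * b₀ :=
    ⟨Real.sqrt (2 * b₀), Real.sqrt_nonneg _, Real.sq_sqrt (by linarith)⟩
  set P : ℝ[X] := (hermite k).map (Int.castRingHom ℝ) with hPdef
  set Q : ℝ[X] := P.comp (C c * X) with hQdef
  set V : ℝ[X] := C b₀^2*X^2 - (2*C (k:ℝ)+1)*C b₀ with hVdef
  -- Step 1 : explicit form of ψ
  have hψQ : ψ = fun x => (-c) ^ k * (eval x Q * Real.exp (-(b₀ * x ^ 2) / 2)) := by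
    funext x
    rw [hψ x]
    have harg : (fun y : ℝ => Real.exp (-b₀ * y ^ 2))
        = fun y => Real.exp (-((c * y) ^ 2 / 2)) := by
      funext y
      congr 1
      rw [mul_pow, hc2]
      ring
    rw [harg, iteratedDeriv_eq_iterate, iter_deriv_gauss_scale,
      Polynomial.deriv_gaussian_eq_hermite_mul_gaussian]
    have hevalQ : (aeval (c * x) (hermite k) : ℝ) = eval x Q := by
      rw [hQdef, eval_comp, hPdef]
      simp [Polynomial.eval_map, Polynomial.aeval_def, algebraMap_int_eq]
    rw [hevalQ]
    have hexp : Real.exp (b₀ * x ^ 2 / 2) * Real.exp (-((c * x) ^ 2 / 2))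
        = Real.exp (-(b₀ * x ^ 2) / 2) := by
      rw [← Real.exp_add, mul_pow, hc2]
      ring_nf
    rw [← hexp, neg_pow]
    ring
  -- Step 2 : derivative of polynomial times half-gaussian
  have hd : ∀ R : ℝ[X], deriv (fun x => eval x R * Real.exp (-(b₀ * x ^ 2) / 2))
      = fun x => eval x (derivative R - C b₀ * X * R) * Real.exp (-(b₀ * x ^ 2) / 2) := by
    intro R
    funext x
    have h1 : HasDerivAt (fun x : ℝ => -(b₀ * x ^ 2) / 2) (-(b₀ * x)) x := by
      have h := (hasDerivAt_pow 2 x).const_mul (-b₀ / 2)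
      have hf : (fun x : ℝ => -b₀ / 2 * x ^ 2) = fun x : ℝ => -(b₀ * x ^ 2) / 2 := by
        funext y
        ring
      rw [hf] at h
      refine h.congr_deriv ?_
      ring
    have h3 := ((R.hasDerivAt x).mul h1.exp).deriv
    rw [show (fun x => eval x R * Real.exp (-(b₀ * x ^ 2) / 2)) = (fun x => eval x R) * (fun x => Real.exp (-(b₀ * x ^ 2) / 2)) from rfl, h3]
    simp
    ring
  -- Step 3 : ODE for Q, second derivative of ψ
  have hodeQ : derivative (derivative Q) = 2*C b₀*X*derivative Q - 2*C b₀*C (k:ℝ)*Q := by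
    rw [hQdef, hPdef]
    exact ode_Q b₀ c hc2 k
  have hR2V : derivative (derivative Q - C b₀ * X * Q)
      - C b₀ * X * (derivative Q - C b₀ * X * Q) = V * Q := by
    rw [hVdef]
    simp only [derivative_sub, derivative_mul, derivative_C, derivative_X]
    linear_combination hodeQ
  have hψ1 : deriv ψ
      = fun x => (-c) ^ k * (eval x (derivative Q - C b₀ * X * Q)
          * Real.exp (-(b₀ * x ^ 2) / 2)) := by
    funext x
    rw [hψQ, deriv_const_mul_field, hd Q]
  have hψ2 : deriv (deriv ψ)
      = fun x => (-c) ^ k * (eval x (V * Q) * Real.exp (-(b₀ * x ^ 2) / 2)) := by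
    funext x
    rw [hψ1, deriv_const_mul_field, hd (derivative Q - C b₀ * X * Q), hR2V]
  -- Step 4 : integral identities
  have hexp2 : ∀ x : ℝ, Real.exp (-(b₀ * x ^ 2) / 2) * Real.exp (-(b₀ * x ^ 2) / 2)
      = Real.exp (-b₀ * x ^ 2) := by
    intro x
    rw [← Real.exp_add]
    ring_nf
  have hL : (fun x : ℝ => (deriv (deriv ψ) x) ^ 2)
      = fun x => ((-c)^k)^2 * (eval x ((V*Q)^2) * Real.exp (-b₀ * x ^ 2)) := by
    funext x
    rw [hψ2, ← hexp2 x, eval_pow]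
    ring
  have hR : (fun x : ℝ => ψ x ^ 2)
      = fun x => ((-c)^k)^2 * (eval x (Q^2) * Real.exp (-b₀ * x ^ 2)) := by
    funext x
    rw [hψQ, ← hexp2 x, eval_pow]
    ring
  rw [hL, hR, integral_const_mul, integral_const_mul]
  have hmain : (∫ x : ℝ, eval x ((V*Q)^2) * Real.exp (-b₀*x^2))
      = (3*(2*(k:ℝ)^2+2*(k:ℝ)+1)*b₀^2/4) * ∫ x : ℝ, eval x (Q^2) * Real.exp (-b₀*x^2) := by
    have hkey := integral_deriv_poly_gauss hb₀
      ((-4*C b₀^3*(C (k:ℝ)+2)*X^3 + 2*C b₀^2*(5*(2*C (k:ℝ)+1)*(C (k:ℝ)+1)-3)*X) * Q^2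
      + (4*C b₀^3*X^4 + 2*C b₀^2*(3-5*(2*C (k:ℝ)+1))*X^2 - 5*(2*C (k:ℝ)+1)*C b₀) * Q * derivative Q
      + (-2*C b₀^2*X^3 + 5*(2*C (k:ℝ)+1)*C b₀*X) * (derivative Q)^2)
    have hid := poly_identity b₀ (k:ℝ) Q hodeQ
    rw [hid] at hkey
    have hsplit : ∀ x : ℝ, eval x ((16:ℝ[X])*(V*Q)^2
          - 12*(2*C (k:ℝ)^2+2*C (k:ℝ)+1)*C b₀^2*Q^2) * Real.exp (-b₀*x^2)
        = 16 * (eval x ((V*Q)^2) * Real.exp (-b₀*x^2))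
          - (12*(2*(k:ℝ)^2+2*(k:ℝ)+1)*b₀^2) * (eval x (Q^2) * Real.exp (-b₀*x^2)) := by
      intro x
      simp only [eval_mul, eval_sub, eval_add, eval_pow, eval_C, eval_ofNat, eval_one]
      ring
    rw [← hVdef] at hkey
    simp_rw [hsplit] at hkey
    rw [integral_sub (((integrable_poly_gauss hb₀ _).const_mul _))
      (((integrable_poly_gauss hb₀ _).const_mul _)), integral_const_mul,
      integral_const_mul] at hkey
    linear_combination hkey / 16
  rw [hmain]
  ring
end
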